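/- Let a > 0, ρ₁ > 0, ρ₂ > 0 be real numbers, let θ ∈ (0, π], and let d be a real number with |ρ₁ − ρ₂| ≤ d ≤ ρ₁ + ρ₂. If cosh(a·d) ≥ cosh(a·ρ₁)·cosh(a·ρ₂) − sinh(a·ρ₁)·sinh(a·ρ₂)·cos(θ), then sin²(θ/2) ≤ exp(−a·(ρ₁ + ρ₂ − d)), and consequently (a/2)·(ρ₁ + ρ₂ − d) ≤ log(π/θ). -/

import Mathlib

lemma sinh_shift_le (x s : ℝ) (hs : 0 ≤ s) :
    Real.sinh (x - s) ≤ Real.exp (-s) * Real.sinh x := by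
  rw [Real.sinh_eq, Real.sinh_eq]
  have h1 : Real.exp (x - s) = Real.exp (-s) * Real.exp x := by
    rw [← Real.exp_add]; ring_nf
  have h2 : Real.exp (-(x - s)) = Real.exp s * Real.exp (-x) := by
    rw [← Real.exp_add]; ring_nf
  have h3 : Real.exp (-s) ≤ Real.exp s := Real.exp_le_exp.mpr (by linarith)
  have h4 : (0:ℝ) < Real.exp (-x) := Real.exp_pos _
  rw [h1, h2]
  nlinarith [mul_le_mul_of_nonneg_right h3 h4.le]

lemma cosh_factor (u v s : ℝ) :
    Real.cosh (u + v - 2*s) - Real.cosh (u - v) =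
      2 * Real.sinh (u - s) * Real.sinh (v - s) := by
  rw [Real.cosh_eq, Real.cosh_eq, Real.sinh_eq, Real.sinh_eq]
  have e : ∀ y z : ℝ, Real.exp (y + z) = Real.exp y * Real.exp z := Real.exp_add
  have h1 : Real.exp (u + v - 2*s) = Real.exp (u - s) * Real.exp (v - s) := by
    rw [← Real.exp_add]; ring_nf
  have h2 : Real.exp (-(u + v - 2*s)) = Real.exp (-(u - s)) * Real.exp (-(v - s)) := by
    rw [← Real.exp_add]; ring_nf
  have h3 : Real.exp (u - v) = Real.exp (u - s) * Real.exp (-(v - s)) := by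
    rw [← Real.exp_add]; ring_nf
  have h4 : Real.exp (-(u - v)) = Real.exp (-(u - s)) * Real.exp (v - s) := by
    rw [← Real.exp_add]; ring_nf
  rw [h1, h2, h3, h4]; ring

set_option maxHeartbeats 1000000 in
theorem deficiency_angle_estimate (a ρ₁ ρ₂ d θ : ℝ) (ha : 0 < a) (h₁ : 0 < ρ₁) (h₂ : 0 < ρ₂)
    (hθ₀ : 0 < θ) (hθπ : θ ≤ Real.pi)
    (hd₁ : |ρ₁ - ρ₂| ≤ d) (hd₂ : d ≤ ρ₁ + ρ₂)
    (hlaw : Real.cosh (a * d) ≥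
      Real.cosh (a * ρ₁) * Real.cosh (a * ρ₂) -
        Real.sinh (a * ρ₁) * Real.sinh (a * ρ₂) * Real.cos θ) :
    Real.sin (θ / 2) ^ 2 ≤ Real.exp (-(a * (ρ₁ + ρ₂ - d))) ∧
      (a / 2) * (ρ₁ + ρ₂ - d) ≤ Real.log (Real.pi / θ) := by
  have habs := abs_le.mp hd₁
  set u := a * ρ₁ with hu
  set v := a * ρ₂ with hv
  set s := a * (ρ₁ + ρ₂ - d) / 2 with hs
  have hs0 : 0 ≤ s := by
    have : 0 ≤ ρ₁ + ρ₂ - d := by linarith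
    positivity
  have hus : 0 ≤ u - s := by
    have : 0 ≤ a * (ρ₁ - ρ₂ + d) := by nlinarith [habs.1, habs.2]
    simp only [hu, hs]; nlinarith
  have hvs : 0 ≤ v - s := by
    have : 0 ≤ a * (ρ₂ - ρ₁ + d) := by nlinarith [habs.1, habs.2]
    simp only [hv, hs]; nlinarith
  have hcosθ : Real.cos θ = 1 - 2 * Real.sin (θ / 2) ^ 2 := by
    have h := Real.cos_two_mul (θ / 2)
    have h2 := Real.sin_sq_add_cos_sq (θ / 2)
    have : (2 : ℝ) * (θ / 2) = θ := by ring
    rw [this] at h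
    nlinarith
  have had : a * d = u + v - 2 * s := by simp only [hu, hv, hs]; ring
  have hcoshsub : Real.cosh (u - v) =
      Real.cosh u * Real.cosh v - Real.sinh u * Real.sinh v := Real.cosh_sub u v
  rw [had, hcosθ] at hlaw
  have hkey : 2 * Real.sin (θ / 2) ^ 2 * (Real.sinh u * Real.sinh v) ≤
      2 * Real.sinh (u - s) * Real.sinh (v - s) := by
    have := cosh_factor u v s
    nlinarith [hlaw, hcoshsub]
  have hsu : Real.sinh (u - s) ≤ Real.exp (-s) * Real.sinh u := sinh_shift_le u s hs0
  have hsv : Real.sinh (v - s) ≤ Real.exp (-s) * Real.sinh v := sinh_shift_le v s hs0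
  have hsinhu : 0 < Real.sinh u := Real.sinh_pos_iff.mpr (by positivity)
  have hsinhv : 0 < Real.sinh v := Real.sinh_pos_iff.mpr (by positivity)
  have hsinhus : 0 ≤ Real.sinh (u - s) := Real.sinh_nonneg_iff.mpr hus
  have hsinhvs : 0 ≤ Real.sinh (v - s) := Real.sinh_nonneg_iff.mpr hvs
  have hexps : 0 < Real.exp (-s) := Real.exp_pos _
  have hprod : Real.sinh (u - s) * Real.sinh (v - s) ≤
      (Real.exp (-s) * Real.exp (-s)) * (Real.sinh u * Real.sinh v) := by
    nlinarith [mul_le_mul hsu hsv hsinhvs (by positivity : (0:ℝ) ≤ Real.exp (-s) * Real.sinh u)]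
  have hexp2 : Real.exp (-s) * Real.exp (-s) = Real.exp (-(a * (ρ₁ + ρ₂ - d))) := by
    rw [← Real.exp_add]; congr 1; simp only [hs]; ring
  have hmain : Real.sin (θ / 2) ^ 2 ≤ Real.exp (-(a * (ρ₁ + ρ₂ - d))) := by
    rw [← hexp2]
    have h5 : Real.sin (θ / 2) ^ 2 * (Real.sinh u * Real.sinh v) ≤
        (Real.exp (-s) * Real.exp (-s)) * (Real.sinh u * Real.sinh v) := by
      linarith [hkey, hprod]
    exact le_of_mul_le_mul_right h5 (mul_pos hsinhu hsinhv)
  refine ⟨hmain, ?_⟩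
  have hπ : 0 < Real.pi := Real.pi_pos
  have hθ2 : θ / Real.pi ≤ Real.sin (θ / 2) := by
    have := Real.mul_le_sin (x := θ / 2) (by linarith) (by linarith)
    calc θ / Real.pi = 2 / Real.pi * (θ / 2) := by field_simp
      _ ≤ Real.sin (θ / 2) := this
  have hθπpos : 0 < θ / Real.pi := by positivity
  have hsq : (θ / Real.pi) ^ 2 ≤ Real.exp (-(a * (ρ₁ + ρ₂ - d))) := by
    nlinarith [hθ2, hmain]
  have hlog : Real.log ((θ / Real.pi) ^ 2) ≤ -(a * (ρ₁ + ρ₂ - d)) := by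
    rw [Real.log_le_iff_le_exp (by positivity)]
    exact hsq
  rw [Real.log_pow] at hlog
  have hinv : Real.log (θ / Real.pi) = - Real.log (Real.pi / θ) := by
    rw [← Real.log_inv]; congr 1; field_simp
  rw [hinv] at hlog
  push_cast at hlog
  linarith
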